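/- Consider the planar VTOL aircraft: ẋ¹ = x⁴, ẋ² = x⁵, ẋ³ = x⁶, ẋ⁴ = ((u¹+u²)/m) cos α sin x³ + ((u¹−u²)/m) sin α cos x³, ẋ⁵ = ((u¹+u²)/m) cos α cos x³ + ((u²−u¹)/m) sin α sin x³ − g, ẋ⁶ = ((u²−u¹)/J)(l cos α + h sin α), with m, J > 0, l cos α + h sin α ≠ 0, and set ε = J sin α/(m(l cos α + h sin α)). Then along any solution, the functions y¹ = x¹ + ε sin x³ and y² = x² + ε cos x³ satisfy ÿ¹ = ((u¹+u²)/m) cos α sin x³ + (terms that cancel): specifically ÿ¹ = (1/m)(u¹+u²) cos α sin x³ + (1/m)(u¹−u²) sin α cos x³ + ε(ẋ⁶ cos x³ − (x⁶)² sin x³) = ((u¹+u²) cos α /m − ε (x⁶)²) sin x³ and ÿ² = ((u¹+u²) cos α/m − ε(x⁶)²) cos x³ − g. In particular (ÿ¹, ÿ² + g) is parallel to (sin x³, cos x³), so tan(x³) = ÿ¹/(ÿ² + g) whenever ÿ² + g ≠ 0. -/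

import Mathlib

open Real

/-- Along any solution of the planar VTOL aircraft, the Huygens output
`y¹ = x¹ + ε sin x³`, `y² = x² + ε cos x³` with `ε = J sin α/(m(l cos α + h sin α))`
satisfies `ÿ¹ = C sin x³` and `ÿ² = C cos x³ − g` with
`C = (u¹+u²) cos α/m − ε (x⁶)²`; in particular `tan x³ = ÿ¹/(ÿ² + g)` whenever
`ÿ² + g ≠ 0`. -/
theorem vtol_flat_output_second_derivatives
    (m J l h α g ε : ℝ) (hm : 0 < m) (hJ : 0 < J)
    (hden : l * Real.cos α + h * Real.sin α ≠ 0)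
    (hε : ε = J * Real.sin α / (m * (l * Real.cos α + h * Real.sin α)))
    (x1 x2 x3 x4 x5 x6 u1 u2 : ℝ → ℝ)
    (hd1 : Differentiable ℝ x1) (hd2 : Differentiable ℝ x2)
    (hd3 : Differentiable ℝ x3) (hd4 : Differentiable ℝ x4)
    (hd5 : Differentiable ℝ x5) (hd6 : Differentiable ℝ x6)
    -- system equations (21)
    (h1 : ∀ t, deriv x1 t = x4 t)
    (h2 : ∀ t, deriv x2 t = x5 t)
    (h3 : ∀ t, deriv x3 t = x6 t)
    (h4 : ∀ t, deriv x4 t =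
      (u1 t + u2 t) / m * Real.cos α * Real.sin (x3 t) +
      (u1 t - u2 t) / m * Real.sin α * Real.cos (x3 t))
    (h5 : ∀ t, deriv x5 t =
      (u1 t + u2 t) / m * Real.cos α * Real.cos (x3 t) +
      (u2 t - u1 t) / m * Real.sin α * Real.sin (x3 t) - g)
    (h6 : ∀ t, deriv x6 t =
      (u2 t - u1 t) / J * (l * Real.cos α + h * Real.sin α)) :
    let y1 : ℝ → ℝ := fun t => x1 t + ε * Real.sin (x3 t)
    let y2 : ℝ → ℝ := fun t => x2 t + ε * Real.cos (x3 t)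
    ∀ t : ℝ,
      deriv (deriv y1) t =
        ((u1 t + u2 t) * Real.cos α / m - ε * (x6 t) ^ 2) * Real.sin (x3 t) ∧
      deriv (deriv y2) t =
        ((u1 t + u2 t) * Real.cos α / m - ε * (x6 t) ^ 2) * Real.cos (x3 t) - g ∧
      (deriv (deriv y2) t + g ≠ 0 →
        Real.tan (x3 t) = deriv (deriv y1) t / (deriv (deriv y2) t + g)) := by
  intro y1 y2 t
  have hm' : m ≠ 0 := ne_of_gt hm
  have hJ' : J ≠ 0 := ne_of_gt hJ
  have h3' : ∀ s, HasDerivAt x3 (x6 s) s := fun s => h3 s ▸ (hd3 s).hasDerivAt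
  have hsin : ∀ s, HasDerivAt (fun t => Real.sin (x3 t)) (Real.cos (x3 s) * x6 s) s :=
    fun s => (Real.hasDerivAt_sin (x3 s)).comp s (h3' s)
  have hcos : ∀ s, HasDerivAt (fun t => Real.cos (x3 t)) (-Real.sin (x3 s) * x6 s) s :=
    fun s => (Real.hasDerivAt_cos (x3 s)).comp s (h3' s)
  have hy1 : ∀ s, HasDerivAt y1 (x4 s + ε * (Real.cos (x3 s) * x6 s)) s := by
    intro s
    have := ((h1 s ▸ (hd1 s).hasDerivAt).add ((hsin s).const_mul ε))
    exact this
  have hy2 : ∀ s, HasDerivAt y2 (x5 s + ε * (-Real.sin (x3 s) * x6 s)) s := by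
    intro s
    have := ((h2 s ▸ (hd2 s).hasDerivAt).add ((hcos s).const_mul ε))
    exact this
  have hdy1 : deriv y1 = fun s => x4 s + ε * (Real.cos (x3 s) * x6 s) :=
    funext fun s => (hy1 s).deriv
  have hdy2 : deriv y2 = fun s => x5 s + ε * (-Real.sin (x3 s) * x6 s) :=
    funext fun s => (hy2 s).deriv
  have hddy1 : deriv (deriv y1) t =
      deriv x4 t + ε * ((-Real.sin (x3 t) * x6 t) * x6 t + Real.cos (x3 t) * deriv x6 t) := by
    rw [hdy1]
    exact (((hd4 t).hasDerivAt).add (((hcos t).mul (hd6 t).hasDerivAt).const_mul ε)).deriv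
  have hddy2 : deriv (deriv y2) t =
      deriv x5 t + ε * (-((Real.cos (x3 t) * x6 t) * x6 t) + -Real.sin (x3 t) * deriv x6 t) := by
    rw [hdy2]
    have hns : HasDerivAt (fun s => -Real.sin (x3 s)) (-(Real.cos (x3 t) * x6 t)) t :=
      (hsin t).neg
    have : HasDerivAt (fun s => x5 s + ε * (-Real.sin (x3 s) * x6 s))
        (deriv x5 t + ε * (-(Real.cos (x3 t) * x6 t) * x6 t + -Real.sin (x3 t) * deriv x6 t)) t :=
      ((hd5 t).hasDerivAt).add ((hns.mul (hd6 t).hasDerivAt).const_mul ε)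
    rw [this.deriv]; ring
  have e1 : deriv (deriv y1) t =
      ((u1 t + u2 t) * Real.cos α / m - ε * (x6 t) ^ 2) * Real.sin (x3 t) := by
    rw [hddy1, h4, h6, hε]
    field_simp
    have hden' : Real.cos α * l + Real.sin α * h ≠ 0 := by
      rw [mul_comm, mul_comm (Real.sin α)]; exact hden
    field_simp
    ring
  have e2 : deriv (deriv y2) t =
      ((u1 t + u2 t) * Real.cos α / m - ε * (x6 t) ^ 2) * Real.cos (x3 t) - g := by
    rw [hddy2, h5, h6, hε]
    field_simp
    have hden' : Real.cos α * l + Real.sin α * h ≠ 0 := by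
      rw [mul_comm, mul_comm (Real.sin α)]; exact hden
    field_simp
    ring
  refine ⟨e1, e2, fun hne => ?_⟩
  rw [e1, e2] at *
  set C := (u1 t + u2 t) * Real.cos α / m - ε * (x6 t) ^ 2 with hC
  have hCcos : C * Real.cos (x3 t) ≠ 0 := by
    intro hz; apply hne; rw [hz]; ring
  have hCne : C ≠ 0 := fun hz => hCcos (by rw [hz]; ring)
  have hcosne : Real.cos (x3 t) ≠ 0 := fun hz => hCcos (by rw [hz]; ring)
  have : C * Real.cos (x3 t) - g + g = C * Real.cos (x3 t) := by ring
  rw [this, Real.tan_eq_sin_div_cos]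
  field_simp
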